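/- Let l_max ≥ 0, and for each i ∈ {1,…,N} let L_i, l_i ∈ [0, l_max] and β_i ∈ [0,1] satisfy L_i ≤ l_i + l_max·min(1, T·β_i), where T ≥ 1. Suppose β is monotonically decreasing and let n_β = max{n ≤ N : β_n > 1/T} (or 0 if no such n). Then (1/N)Σ_{i=1}^N L_i ≤ (1/N)Σ_{i=1}^N l_i + (l_max/N)·(n_β + T·Σ_{i=n_β+1}^N β_i). -/

import Mathlib

/-- Core averaging step in the DAGGER regret analysis:
`(1/N)Σ L_i ≤ (1/N)Σ l_i + (l_max/N)·(n_β + T·Σ_{i=n_β+1}^N β_i)`. -/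
theorem stmt_7 (N T : ℕ) (hN : 1 ≤ N) (hT : 1 ≤ T) (lmax : ℝ) (hlmax : 0 ≤ lmax)
    (L l β : ℕ → ℝ)
    (hL : ∀ i ∈ Finset.Icc 1 N, L i ∈ Set.Icc 0 lmax)
    (hl : ∀ i ∈ Finset.Icc 1 N, l i ∈ Set.Icc 0 lmax)
    (hβ : ∀ i ∈ Finset.Icc 1 N, β i ∈ Set.Icc (0:ℝ) 1)
    (hbound : ∀ i ∈ Finset.Icc 1 N, L i ≤ l i + lmax * min 1 ((T : ℝ) * β i))
    (hmono : ∀ i j, i ≤ j → β j ≤ β i)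
    (nβ : ℕ) (hnβN : nβ ≤ N)
    (hnβ_max : ∀ n ∈ Finset.Icc 1 N, β n > 1 / (T : ℝ) → n ≤ nβ)
    (hnβ_mem : nβ = 0 ∨ β nβ > 1 / (T : ℝ)) :
    (1 / (N : ℝ)) * ∑ i ∈ Finset.Icc 1 N, L i ≤
      (1 / (N : ℝ)) * ∑ i ∈ Finset.Icc 1 N, l i +
        (lmax / N) * ((nβ : ℝ) + (T : ℝ) * ∑ i ∈ Finset.Icc (nβ + 1) N, β i) := by
  have hIcc : Finset.Icc 1 N = Finset.Ioc 0 N := by rw [← Finset.Icc_add_one_left_eq_Ioc]; rfl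
  have hIcc2 : Finset.Icc (nβ + 1) N = Finset.Ioc nβ N := by rw [← Finset.Icc_add_one_left_eq_Ioc]
  have hS : ∑ i ∈ Finset.Icc 1 N, min 1 ((T : ℝ) * β i)
      ≤ (nβ : ℝ) + (T : ℝ) * ∑ i ∈ Finset.Icc (nβ + 1) N, β i := by
    rw [hIcc, hIcc2, ← Finset.sum_Ioc_consecutive _ (Nat.zero_le nβ) hnβN]
    have h1 : ∑ i ∈ Finset.Ioc 0 nβ, min 1 ((T : ℝ) * β i) ≤ (nβ : ℝ) := by
      calc ∑ i ∈ Finset.Ioc 0 nβ, min 1 ((T : ℝ) * β i)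
          ≤ ∑ i ∈ Finset.Ioc 0 nβ, (1 : ℝ) :=
            Finset.sum_le_sum fun i _ => min_le_left _ _
        _ = (nβ : ℝ) := by simp
    have h2 : ∑ i ∈ Finset.Ioc nβ N, min 1 ((T : ℝ) * β i)
        ≤ (T : ℝ) * ∑ i ∈ Finset.Ioc nβ N, β i := by
      rw [Finset.mul_sum]
      exact Finset.sum_le_sum fun i _ => min_le_right _ _
    linarith
  have hsum : ∑ i ∈ Finset.Icc 1 N, L i
      ≤ ∑ i ∈ Finset.Icc 1 N, l i
        + lmax * ∑ i ∈ Finset.Icc 1 N, min 1 ((T : ℝ) * β i) := by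
    rw [Finset.mul_sum, ← Finset.sum_add_distrib]
    exact Finset.sum_le_sum hbound
  have hNpos : (0 : ℝ) < N := by exact_mod_cast hN
  have hinv : (0 : ℝ) ≤ 1 / (N : ℝ) := by positivity
  have key : ∑ i ∈ Finset.Icc 1 N, L i
      ≤ ∑ i ∈ Finset.Icc 1 N, l i
        + lmax * ((nβ : ℝ) + (T : ℝ) * ∑ i ∈ Finset.Icc (nβ + 1) N, β i) := by
    nlinarith [mul_le_mul_of_nonneg_left hS hlmax]
  have := mul_le_mul_of_nonneg_left key hinv
  calc (1 / (N : ℝ)) * ∑ i ∈ Finset.Icc 1 N, L i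
      ≤ (1 / (N : ℝ)) * (∑ i ∈ Finset.Icc 1 N, l i
        + lmax * ((nβ : ℝ) + (T : ℝ) * ∑ i ∈ Finset.Icc (nβ + 1) N, β i)) := this
    _ = (1 / (N : ℝ)) * ∑ i ∈ Finset.Icc 1 N, l i
        + (lmax / N) * ((nβ : ℝ) + (T : ℝ) * ∑ i ∈ Finset.Icc (nβ + 1) N, β i) := by
        field_simp
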